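/- Let f be a defective probability generating function with smallest fixed point q and gamma = f'(q) > 0. Then for every integer k >= 1, the ratio ((f(t+k-1,1) - f(t+k-1,0)) - (f(t+k,1) - f(t+k,0))) / (f(t-1,1) - f(t-1,0)) converges to (1-gamma)*gamma^k as t tends to infinity. Probabilistically, P(T = t+k | T >= t) converges to (1-gamma)*gamma^k, where T is the absorption time of the defective Galton-Watson process with reproduction law f. -/

import Mathlib

open Filter Finset

/-- For a defective pgf `f` with smallest fixed point `q` and `γ = f'(q) > 0`,
`P(T = t+k | T ≥ t) → (1-γ) γ^k` for every `k ≥ 1`, where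
`P(T = t+k | T ≥ t) = ((f^[t+k-1] 1 - f^[t+k-1] 0) - (f^[t+k] 1 - f^[t+k] 0)) / (f^[t-1] 1 - f^[t-1] 0)`. -/
theorem stmt_3
    (p : ℕ → ℝ) (ε : ℝ) (f : ℝ → ℝ) (q γ : ℝ)
    (hp : ∀ k, 0 ≤ p k) (hε : ε ∈ Set.Ioo (0 : ℝ) 1)
    (hsum : HasSum p (1 - ε))
    (hf : ∀ s : ℝ, f s = ∑' k, p k * s ^ k)
    (hq : q ∈ Set.Ico (0 : ℝ) 1) (hfix : f q = q)
    (hqmin : ∀ x ∈ Set.Icc (0 : ℝ) 1, f x = x → q ≤ x)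
    (hγ : γ = deriv f q) (hγpos : 0 < γ)
    (k : ℕ) (hk : 1 ≤ k) :
    Tendsto
      (fun t : ℕ =>
        ((f^[t + k - 1] 1 - f^[t + k - 1] 0) - (f^[t + k] 1 - f^[t + k] 0)) /
          (f^[t - 1] 1 - f^[t - 1] 0))
      atTop (nhds ((1 - γ) * γ ^ k)) := by
  obtain ⟨hε0, hε1⟩ := hε
  obtain ⟨hq0, hq1⟩ := hq
  have hpsum : Summable p := hsum.summable
  have hp1 : ∀ n, p n ≤ 1 := fun n =>
    le_trans (le_hasSum hsum n fun m _ => hp m) (by linarith)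
  set r : ℝ := 1 - ε / 2 with hrdef
  have hr1 : r < 1 := by simp only [hrdef]; linarith
  have hr0 : 0 < r := by simp only [hrdef]; linarith
  -- summability of the pgf series
  have hsumm : ∀ x : ℝ, |x| ≤ 1 → Summable (fun n => p n * x ^ n) := by
    intro x hx
    refine Summable.of_norm_bounded hpsum fun n => ?_
    rw [norm_mul, norm_pow, Real.norm_eq_abs (p n), abs_of_nonneg (hp n), Real.norm_eq_abs]
    calc p n * |x| ^ n ≤ p n * 1 ^ n :=
          mul_le_mul_of_nonneg_left (pow_le_pow_left₀ (abs_nonneg x) hx n) (hp n)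
      _ = p n := by ring
  have hrpow : ∀ (n j : ℕ), r ^ (n - j) ≤ (1 / r ^ j) * r ^ n := by
    intro n j
    rw [one_div, inv_mul_eq_div, le_div_iff₀ (by positivity), ← pow_add]
    exact pow_le_pow_of_le_one hr0.le hr1.le (by omega)
  have hu : Summable (fun n : ℕ => (n : ℝ) * r ^ (n - 1)) := by
    rw [← summable_nat_add_iff 1]
    have h1 : Summable (fun n : ℕ => ((n : ℝ) ^ 1) * r ^ n) :=
      summable_pow_mul_geometric_of_norm_lt_one 1
        (by rwa [Real.norm_eq_abs, abs_of_pos hr0])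
    have h0 : Summable (fun n : ℕ => r ^ n) := summable_geometric_of_lt_one hr0.le hr1
    refine (h1.add h0).congr fun n => ?_
    push_cast
    ring_nf
  -- summability of the derivative series
  have hsummd : ∀ x : ℝ, |x| ≤ r → Summable (fun n => p n * ((n : ℝ) * x ^ (n - 1))) := by
    intro x hx
    refine Summable.of_norm_bounded hu fun n => ?_
    rw [norm_mul, norm_mul, norm_pow, Real.norm_eq_abs (p n), abs_of_nonneg (hp n),
      Real.norm_natCast, Real.norm_eq_abs]
    have h3 : |x| ^ (n-1) ≤ r ^ (n-1) := pow_le_pow_left₀ (abs_nonneg x) hx _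
    calc p n * ((n:ℝ) * |x| ^ (n-1)) ≤ 1 * ((n:ℝ) * r ^ (n-1)) :=
          mul_le_mul (hp1 n) (mul_le_mul_of_nonneg_left h3 (Nat.cast_nonneg n))
            (by positivity) one_pos.le
      _ = (n:ℝ) * r ^ (n-1) := one_mul _
  set g : ℝ → ℝ := fun x => ∑' n, p n * ((n : ℝ) * x ^ (n - 1)) with hgdef
  -- differentiability of f on (-r, r)
  have h0mem : (0:ℝ) ∈ Set.Ioo (-r) r := ⟨by linarith, hr0⟩
  have hderiv : ∀ x ∈ Set.Ioo (-r) r, HasDerivAt f (g x) x := by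
    intro x hx
    have H := hasDerivAt_tsum_of_isPreconnected hu isOpen_Ioo isPreconnected_Ioo
      (fun n y _ => (hasDerivAt_pow n y).const_mul (p n))
      (fun n y hy => ?_) h0mem (hsumm 0 (by norm_num)) hx
    · exact H.congr_of_eventuallyEq (Filter.Eventually.of_forall hf)
    · have hyr : |y| ≤ r := by rw [abs_le]; exact ⟨hy.1.le, hy.2.le⟩
      have h3 : |y| ^ (n-1) ≤ r ^ (n-1) := pow_le_pow_left₀ (abs_nonneg y) hyr _
      rw [norm_mul, norm_mul, norm_pow, Real.norm_eq_abs (p n), abs_of_nonneg (hp n),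
        Real.norm_natCast, Real.norm_eq_abs]
      calc p n * ((n:ℝ) * |y| ^ (n-1)) ≤ 1 * ((n:ℝ) * r ^ (n-1)) :=
            mul_le_mul (hp1 n) (mul_le_mul_of_nonneg_left h3 (Nat.cast_nonneg n))
              (by positivity) one_pos.le
        _ = (n:ℝ) * r ^ (n-1) := one_mul _
  -- continuity of g at points of (-r, r)
  have hgcont : ∀ x ∈ Set.Ioo (-r) r, ContinuousAt g x := by
    have hu2 : Summable (fun n : ℕ => (n:ℝ) * (((n-1:ℕ):ℝ) * r ^ (n - 1 - 1))) := by
      have h2 : Summable (fun n : ℕ => (1 / r ^ 2) * (((n : ℝ) ^ 2) * r ^ n)) :=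
        (summable_pow_mul_geometric_of_norm_lt_one (R := ℝ) 2
          (by rwa [Real.norm_eq_abs, abs_of_pos hr0])).mul_left _
      refine Summable.of_norm_bounded h2 fun n => ?_
      have hn1 : ((n-1:ℕ):ℝ) ≤ (n:ℝ) := Nat.cast_le.mpr (Nat.sub_le n 1)
      have hrb : r ^ (n - 1 - 1) ≤ (1 / r ^ 2) * r ^ n := by
        have hnn : n - 1 - 1 = n - 2 := by omega
        rw [hnn]
        exact hrpow n 2
      rw [Real.norm_eq_abs, abs_of_nonneg (by positivity)]
      calc (n:ℝ) * (((n-1:ℕ):ℝ) * r ^ (n - 1 - 1))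
          ≤ (n:ℝ) * ((n:ℝ) * ((1 / r ^ 2) * r ^ n)) := by
            apply mul_le_mul_of_nonneg_left _ (Nat.cast_nonneg n)
            exact mul_le_mul hn1 hrb (by positivity) (Nat.cast_nonneg n)
        _ = (1 / r ^ 2) * (((n : ℝ) ^ 2) * r ^ n) := by ring
    intro x hx
    have H := hasDerivAt_tsum_of_isPreconnected hu2 isOpen_Ioo isPreconnected_Ioo
      (fun n y _ => ((hasDerivAt_pow (n-1) y).const_mul ((n:ℝ))).const_mul (p n))
      (fun n y hy => ?_) h0mem (hsummd 0 (by rw [abs_zero]; exact hr0.le)) hx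
    · exact H.continuousAt
    · have hyr : |y| ≤ r := by rw [abs_le]; exact ⟨hy.1.le, hy.2.le⟩
      have h3 : |y| ^ (n-1-1) ≤ r ^ (n-1-1) := pow_le_pow_left₀ (abs_nonneg y) hyr _
      rw [norm_mul, norm_mul, norm_mul, norm_pow, Real.norm_eq_abs (p n),
        abs_of_nonneg (hp n), Real.norm_natCast, Real.norm_natCast, Real.norm_eq_abs]
      calc p n * ((n:ℝ) * (((n-1:ℕ):ℝ) * |y| ^ (n-1-1)))
          ≤ 1 * ((n:ℝ) * (((n-1:ℕ):ℝ) * r ^ (n-1-1))) := by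
            apply mul_le_mul (hp1 n) _ (by positivity) one_pos.le
            apply mul_le_mul_of_nonneg_left _ (Nat.cast_nonneg n)
            exact mul_le_mul_of_nonneg_left h3 (Nat.cast_nonneg _)
        _ = (n:ℝ) * (((n-1:ℕ):ℝ) * r ^ (n-1-1)) := one_mul _
  have hf1 : f 1 = 1 - ε := by rw [hf]; simpa using hsum.tsum_eq
  -- monotonicity of f on [0,1]
  have hmono : ∀ x y : ℝ, 0 ≤ x → x ≤ y → y ≤ 1 → f x ≤ f y := by
    intro x y hx hxy hy1
    rw [hf x, hf y]
    refine Summable.tsum_le_tsum (fun n => ?_)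
      (hsumm x (by rw [abs_of_nonneg hx]; linarith))
      (hsumm y (by rw [abs_of_nonneg (hx.trans hxy)]; exact hy1))
    exact mul_le_mul_of_nonneg_left (pow_le_pow_left₀ hx hxy n) (hp n)
  have hfnonneg : ∀ x : ℝ, 0 ≤ x → x ≤ 1 → 0 ≤ f x := by
    intro x hx _
    rw [hf x]
    exact tsum_nonneg fun n => mul_nonneg (hp n) (pow_nonneg hx n)
  have hfle : ∀ x : ℝ, 0 ≤ x → x ≤ 1 → f x ≤ 1 - ε := by
    intro x hx0 hx1
    calc f x ≤ f 1 := hmono x 1 hx0 hx1 le_rfl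
      _ = 1 - ε := hf1
  have hqle : q ≤ 1 - ε := by
    calc q = f q := hfix.symm
      _ ≤ 1 - ε := hfle q hq0 hq1.le
  have hqr : q ∈ Set.Ioo (-r) r := ⟨by linarith, by simp only [hrdef]; linarith⟩
  have hγg : γ = g q := by rw [hγ, (hderiv q hqr).deriv]
  set a : ℕ → ℝ := fun t => f^[t] 0 with hadef
  set b : ℕ → ℝ := fun t => f^[t] 1 with hbdef
  have ha_succ : ∀ t, a (t + 1) = f (a t) := fun t => Function.iterate_succ_apply' f t 0
  have hb_succ : ∀ t, b (t + 1) = f (b t) := fun t => Function.iterate_succ_apply' f t 1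
  have ha_mem : ∀ t, 0 ≤ a t ∧ a t ≤ q := by
    intro t; induction t with
    | zero => exact ⟨le_rfl, hq0⟩
    | succ t ih =>
      rw [ha_succ]
      exact ⟨hfnonneg _ ih.1 (le_trans ih.2 hq1.le),
        by calc f (a t) ≤ f q := hmono _ _ ih.1 ih.2 hq1.le
            _ = q := hfix⟩
  have hb_mem : ∀ t, q ≤ b t ∧ b t ≤ 1 := by
    intro t; induction t with
    | zero => exact ⟨hq1.le, le_rfl⟩
    | succ t ih =>
      rw [hb_succ]
      exact ⟨by calc q = f q := hfix.symm
            _ ≤ f (b t) := hmono _ _ hq0 ih.1 ih.2,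
        le_trans (hfle _ (le_trans hq0 ih.1) ih.2) (by linarith)⟩
  have ha_mono : Monotone a := by
    apply monotone_nat_of_le_succ
    intro t
    induction t with
    | zero => rw [ha_succ]; exact hfnonneg 0 le_rfl zero_le_one
    | succ t ih =>
      calc a (t+1+1) = f (a (t+1)) := ha_succ (t+1)
        _ ≥ f (a t) := hmono _ _ (ha_mem t).1 ih (le_trans (ha_mem (t+1)).2 hq1.le)
        _ = a (t+1) := (ha_succ t).symm
  have hb_anti : Antitone b := by
    apply antitone_nat_of_succ_le
    intro t
    induction t with
    | zero => rw [hb_succ]; simpa [hbdef] using (by linarith : f 1 ≤ 1)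
    | succ t ih =>
      calc b (t+1+1) = f (b (t+1)) := hb_succ (t+1)
        _ ≤ f (b t) := hmono _ _ (le_trans hq0 (hb_mem (t+1)).1) ih (hb_mem t).2
        _ = b (t+1) := (hb_succ t).symm
  have hbr : ∀ t, 1 ≤ t → b t ≤ 1 - ε := by
    intro t ht
    calc b t ≤ b 1 := hb_anti ht
      _ = 1 - ε := by rw [hbdef]; simpa using hf1
  -- limits of a and b
  have ha_lim : Tendsto a atTop (nhds q) := by
    have hbdd : BddAbove (Set.range a) := ⟨q, by rintro x ⟨t, rfl⟩; exact (ha_mem t).2⟩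
    have hlim := tendsto_atTop_ciSup ha_mono hbdd
    set L := ⨆ t, a t with hL
    have hL_le : L ≤ q := ciSup_le fun t => (ha_mem t).2
    have hL0 : 0 ≤ L := le_trans (ha_mem 0).1 (le_ciSup hbdd 0)
    have hLr : L ∈ Set.Ioo (-r) r :=
      ⟨by linarith, by have := hqr.2; linarith⟩
    have h1 : Tendsto (fun t => f (a t)) atTop (nhds L) :=
      (hlim.comp (tendsto_add_atTop_nat 1)).congr fun t => ha_succ t
    have h2 : Tendsto (fun t => f (a t)) atTop (nhds (f L)) :=
      ((hderiv L hLr).continuousAt.tendsto).comp hlim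
    have hfL : f L = L := tendsto_nhds_unique h2 h1
    have : L = q := le_antisymm hL_le (hqmin L ⟨hL0, hL_le.trans hq1.le⟩ hfL)
    rwa [this] at hlim
  have hb1 : b 1 = 1 - ε := by
    have : b 1 = f 1 := hb_succ 0
    rw [this, hf1]
  have hb_lim : Tendsto b atTop (nhds q) := by
    have hbdd : BddBelow (Set.range b) := ⟨q, by rintro x ⟨t, rfl⟩; exact (hb_mem t).1⟩
    have hlim := tendsto_atTop_ciInf hb_anti hbdd
    set M := ⨅ t, b t with hM
    have hM_ge : q ≤ M := le_ciInf fun t => (hb_mem t).1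
    have hM_le : M ≤ 1 - ε := le_trans (ciInf_le hbdd 1) hb1.le
    have hMr : M ∈ Set.Ioo (-r) r :=
      ⟨by linarith, by simp only [hrdef]; linarith⟩
    have h1 : Tendsto (fun t => f (b t)) atTop (nhds M) :=
      (hlim.comp (tendsto_add_atTop_nat 1)).congr fun t => hb_succ t
    have h2 : Tendsto (fun t => f (b t)) atTop (nhds (f M)) :=
      ((hderiv M hMr).continuousAt.tendsto).comp hlim
    have hfM : f M = M := tendsto_nhds_unique h2 h1
    rcases eq_or_lt_of_le hM_ge with heq | hlt
    · rwa [← heq] at hlim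
    · exfalso
      set lam : ℝ := (1 - M) / (1 - q) with hlamdef
      have h1q : 0 < 1 - q := by linarith
      have hlam0 : 0 < lam := div_pos (by linarith) h1q
      have hlam1 : lam < 1 := (div_lt_one h1q).mpr (by linarith)
      have h1q' : (1:ℝ) - q ≠ 0 := ne_of_gt h1q
      have hMeq : lam * q + (1 - lam) * 1 = M := by
        rw [hlamdef]
        field_simp
        ring
      have hconv : ∀ n : ℕ, M ^ n ≤ lam * q ^ n + (1 - lam) * 1 ^ n := by
        intro n
        have h := (convexOn_pow n).2 (Set.mem_Ici.mpr hq0) (Set.mem_Ici.mpr zero_le_one)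
          hlam0.le (by linarith : (0:ℝ) ≤ 1 - lam) (by ring)
        simp only [smul_eq_mul] at h
        calc M ^ n = (lam * q + (1 - lam) * 1) ^ n := by rw [hMeq]
          _ ≤ lam * q ^ n + (1 - lam) * 1 ^ n := h
      have hsum1 : Summable (fun n => lam * (p n * q ^ n)) :=
        (hsumm q (by rw [abs_of_nonneg hq0]; exact hq1.le)).mul_left lam
      have hsum2 : Summable (fun n => (1 - lam) * p n) := hpsum.mul_left (1 - lam)
      have hfM_le : f M ≤ lam * q + (1 - lam) * (1 - ε) := by
        rw [hf M]
        calc (∑' n, p n * M ^ n)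
            ≤ ∑' n, (lam * (p n * q ^ n) + (1 - lam) * p n) := by
              refine Summable.tsum_le_tsum (fun n => ?_)
                (hsumm M (by rw [abs_of_nonneg (by linarith : (0:ℝ) ≤ M)]; linarith))
                (hsum1.add hsum2)
              have := mul_le_mul_of_nonneg_left (hconv n) (hp n)
              calc p n * M ^ n ≤ p n * (lam * q ^ n + (1 - lam) * 1 ^ n) := this
                _ = lam * (p n * q ^ n) + (1 - lam) * p n := by ring
          _ = lam * (∑' n, p n * q ^ n) + (1 - lam) * (∑' n, p n) := by
              rw [Summable.tsum_add hsum1 hsum2, tsum_mul_left, tsum_mul_left]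
          _ = lam * q + (1 - lam) * (1 - ε) := by
              rw [hsum.tsum_eq, ← hf q, hfix]
      have : f M < M := by
        have h3 : lam * q + (1 - lam) * (1 - ε) < lam * q + (1 - lam) * 1 := by
          have : 0 < 1 - lam := by linarith
          nlinarith
        rw [hMeq] at h3
        linarith
      linarith [hfM]
  -- positivity of differences
  have hab : ∀ t, a t < b t := by
    have hex : ∃ m : ℕ, 1 ≤ m ∧ 0 < p m := by
      by_contra h
      push_neg at h
      have hz : ∀ n : ℕ, p n * ((n:ℝ) * q ^ (n-1)) = 0 := by
        intro n
        rcases Nat.eq_zero_or_pos n with rfl | hn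
        · simp
        · have : p n = 0 := le_antisymm (h n hn) (hp n)
          simp [this]
      have : g q = 0 := by
        simp only [hgdef]
        rw [tsum_congr hz]
        exact tsum_zero
      rw [hγg, this] at hγpos
      exact lt_irrefl 0 hγpos
    obtain ⟨m, hm1, hpm⟩ := hex
    intro t
    induction t with
    | zero =>
      show f^[0] 0 < f^[0] 1
      simp only [Function.iterate_zero_apply]
      norm_num
    | succ t ih =>
      rw [ha_succ, hb_succ, hf (a t), hf (b t)]
      have hat1 : a t ≤ 1 := le_trans (ha_mem t).2 hq1.le
      have hbt1 : b t ≤ 1 := (hb_mem t).2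
      refine Summable.tsum_lt_tsum (i := m)
        (fun n => mul_le_mul_of_nonneg_left (pow_le_pow_left₀ (ha_mem t).1 ih.le n) (hp n))
        ?_ (hsumm _ (by rw [abs_of_nonneg (ha_mem t).1]; exact hat1))
        (hsumm _ (by rw [abs_of_nonneg (le_trans (ha_mem t).1 ih.le)]; exact hbt1))
      exact mul_lt_mul_of_pos_left (pow_lt_pow_left₀ ih (ha_mem t).1 (by omega)) hpm
  -- the ratio of consecutive differences tends to γ
  have h1er : 1 - ε ≤ r := by simp only [hrdef]; linarith
  have hM : ∀ t, 1 ≤ t → ∃ c ∈ Set.Ioo (a t) (b t),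
      g c = (f (b t) - f (a t)) / (b t - a t) := by
    intro t ht
    have hsub : Set.Icc (a t) (b t) ⊆ Set.Ioo (-r) r := by
      intro z hz
      constructor
      · have := (ha_mem t).1; have := hz.1; linarith
      · have h4 : (1:ℝ) - ε < r := by simp only [hrdef]; linarith
        have := hbr t ht; have := hz.2; linarith
    refine exists_hasDerivAt_eq_slope f g (hab t) ?_ ?_
    · intro z hz
      exact ((hderiv z (hsub hz)).continuousAt).continuousWithinAt
    · intro z hz
      exact hderiv z (hsub (Set.Ioo_subset_Icc_self hz))
  have hgmono : ∀ x y : ℝ, 0 ≤ x → x ≤ y → y ≤ r → g x ≤ g y := by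
    intro x y hx hxy hyr
    refine Summable.tsum_le_tsum (fun n => ?_)
      (hsummd x (by rw [abs_of_nonneg hx]; linarith))
      (hsummd y (by rw [abs_of_nonneg (hx.trans hxy)]; exact hyr))
    exact mul_le_mul_of_nonneg_left
      (mul_le_mul_of_nonneg_left (pow_le_pow_left₀ hx hxy _) (Nat.cast_nonneg n)) (hp n)
  have key : Tendsto (fun t => (b (t+1) - a (t+1)) / (b t - a t)) atTop (nhds γ) := by
    have hga : Tendsto (fun t => g (a t)) atTop (nhds γ) := by
      rw [hγg]
      exact ((hgcont q hqr).tendsto).comp ha_lim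
    have hgb : Tendsto (fun t => g (b t)) atTop (nhds γ) := by
      rw [hγg]
      exact ((hgcont q hqr).tendsto).comp hb_lim
    refine tendsto_of_tendsto_of_tendsto_of_le_of_le' hga hgb ?_ ?_
    · filter_upwards [eventually_ge_atTop 1] with t ht
      obtain ⟨c, hc, hceq⟩ := hM t ht
      have h1 : (b (t+1) - a (t+1)) / (b t - a t) = g c := by
        rw [ha_succ, hb_succ, hceq]
      rw [h1]
      exact hgmono (a t) c (ha_mem t).1 hc.1.le
        (le_trans hc.2.le (le_trans (hbr t ht) h1er))
    · filter_upwards [eventually_ge_atTop 1] with t ht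
      obtain ⟨c, hc, hceq⟩ := hM t ht
      have h1 : (b (t+1) - a (t+1)) / (b t - a t) = g c := by
        rw [ha_succ, hb_succ, hceq]
      rw [h1]
      exact hgmono c (b t) (le_trans (ha_mem t).1 hc.1.le) hc.2.le
        (le_trans (hbr t ht) h1er)
  -- ratios over j steps
  have hDiv : ∀ j : ℕ, Tendsto (fun t => (b (t+j) - a (t+j)) / (b t - a t)) atTop (nhds (γ^j)) := by
    intro j
    induction j with
    | zero =>
      simp only [Nat.add_zero, pow_zero]
      refine Tendsto.congr (fun t => ?_) tendsto_const_nhds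
      rw [div_self (ne_of_gt (sub_pos.mpr (hab t)))]
    | succ j ih =>
      have h1 : Tendsto (fun t => (b (t+j+1) - a (t+j+1)) / (b (t+j) - a (t+j)))
          atTop (nhds γ) := key.comp (tendsto_add_atTop_nat j)
      have := h1.mul ih
      rw [← pow_succ'] at this
      refine this.congr fun t => ?_
      rw [div_mul_div_comm]
      rw [div_eq_div_iff]
      · ring_nf
      · exact mul_ne_zero (ne_of_gt (sub_pos.mpr (hab (t+j)))) (ne_of_gt (sub_pos.mpr (hab t)))
      · exact ne_of_gt (sub_pos.mpr (hab t))
  -- assemble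
  have hS : Tendsto (fun t => ((b (t+k) - a (t+k)) - (b (t+k+1) - a (t+k+1))) / (b t - a t))
      atTop (nhds ((1 - γ) * γ ^ k)) := by
    have h2 := (hDiv k).sub (hDiv (k+1))
    have heq : ((γ:ℝ)^k - γ^(k+1)) = (1 - γ) * γ ^ k := by ring
    rw [heq] at h2
    refine h2.congr fun t => ?_
    rw [← sub_div, add_assoc]
  have hfinal := hS.comp (tendsto_sub_atTop_nat 1)
  refine Tendsto.congr' ?_ hfinal
  filter_upwards [eventually_ge_atTop 1] with t ht
  have e1 : t - 1 + k = t + k - 1 := by omega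
  have e2 : t - 1 + k + 1 = t + k := by omega
  have e3 : t + k - 1 + 1 = t + k := by omega
  simp only [Function.comp_apply, hadef, hbdef, e1, e2, e3]
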